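/- For Δ = 2 and γ = 0, the recursively defined sweep-cover enumeration function satisfies P_{2,0}(n) = catalan(n − 1) for every n ≥ 1, where catalan(k) denotes the k-th Catalan number (catalan(0) = 1). Equivalently, P_{2,0}(1) = 1 and for n ≥ 2 the recursion reduces to Segner's recurrence P_{2,0}(n) = ∑_{i=1}^{n−1} P_{2,0}(i) · P_{2,0}(n−i), whose solution is the shifted Catalan sequence 1, 1, 2, 5, 14, 42, …. -/

import Mathlib

/-- `Lfun P m i` is the sum, over all ordered `i`-tuples `(k_1, …, k_i)` of positive
integers with `k_1 + ⋯ + k_i = m`, of `∏ j, P (k j)` (an empty sum is `0`). -/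
def Lfun (P : ℕ → ℕ) (m i : ℕ) : ℕ :=
  ∑ k ∈ (Finset.Nat.antidiagonalTuple i m).filter (fun k => ∀ j, 0 < k j),
    ∏ j, P (k j)

/-- `Rnum n m` is the number of set partitions of an `n`-element set into exactly `m`
blocks, each of size at least `2`. -/
noncomputable def Rnum (n m : ℕ) : ℕ :=
  Set.ncard {P : Finset (Finset (Fin n)) |
    P.card = m ∧ (∀ B ∈ P, 2 ≤ B.card) ∧ ∀ x : Fin n, ∃! B, B ∈ P ∧ x ∈ B}

/-- `P` is the recursively defined sweep-cover enumeration function `P_{Δ,γ}`: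
`P 1 = γ + 1` and for `n ≥ 2`,
`P n = ∑_{l=1}^{Δ-2} (Δ choose l) ∑_{r=1}^{Δ-l} L(n-r, l) R(Δ-l, r) + L(n, Δ) + R(Δ, n)`. -/
def IsSweepEnum (Δ γ : ℕ) (P : ℕ → ℕ) : Prop :=
  P 1 = γ + 1 ∧
  ∀ n, 2 ≤ n →
    P n = (∑ l ∈ Finset.Icc 1 (Δ - 2), Nat.choose Δ l *
             ∑ r ∈ Finset.Icc 1 (Δ - l), Lfun P (n - r) l * Rnum (Δ - l) r)
          + Lfun P n Δ + Rnum Δ n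

lemma Rnum_two_eq_zero {n : ℕ} (hn : 2 ≤ n) : Rnum 2 n = 0 := by
  rw [Rnum]
  have he : {P : Finset (Finset (Fin 2)) |
      P.card = n ∧ (∀ B ∈ P, 2 ≤ B.card) ∧ ∀ x : Fin 2, ∃! B, B ∈ P ∧ x ∈ B} = ∅ := by
    ext Q
    simp only [Set.mem_setOf_eq, Set.mem_empty_iff_false, iff_false]
    rintro ⟨hcard, hblocks, -⟩
    have h1 : 1 < Q.card := hcard ▸ hn
    obtain ⟨B1, hB1, B2, hB2, hne⟩ := Finset.one_lt_card.mp h1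
    have hu : ∀ B ∈ Q, B = (Finset.univ : Finset (Fin 2)) := by
      intro B hB
      apply Finset.eq_univ_of_card
      have := hblocks B hB
      have hle : B.card ≤ 2 := le_trans (Finset.card_le_card (Finset.subset_univ B)) (by simp)
      rw [Fintype.card_fin]
      omega
    exact hne ((hu B1 hB1).trans (hu B2 hB2).symm)
  rw [he, Set.ncard_empty]

lemma Lfun_two (P : ℕ → ℕ) (n : ℕ) :
    Lfun P n 2 = ∑ ij ∈ (Finset.HasAntidiagonal.antidiagonal n).filter
      (fun ij => 0 < ij.1 ∧ 0 < ij.2), P ij.1 * P ij.2 := by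
  rw [Lfun, Finset.Nat.antidiagonalTuple_two, Finset.filter_map, Finset.sum_map]
  apply Finset.sum_congr
  · congr 1
    ext ij
    simp [Fin.forall_fin_two]
  · intro ij _
    simp [Fin.prod_univ_two]

theorem sweepEnum_two_zero_eq_catalan (P : ℕ → ℕ) (hP : IsSweepEnum 2 0 P) :
    ∀ n : ℕ, 1 ≤ n → P n = catalan (n - 1) := by
  intro n
  induction n using Nat.strong_induction_on with
  | _ n IH =>
    intro hn
    rcases eq_or_lt_of_le hn with h1 | h2
    · rw [← h1]; simpa using hP.1
    · have h2 : 2 ≤ n := h2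
      rw [hP.2 n h2, Rnum_two_eq_zero h2, Lfun_two]
      simp only [show (2:ℕ) - 2 = 0 from rfl, Finset.Icc_self, add_zero]
      rw [Finset.sum_eq_zero (by simp), zero_add]
      have hcat : catalan (n - 1) = ∑ ij ∈ Finset.HasAntidiagonal.antidiagonal (n - 2),
          catalan ij.1 * catalan ij.2 := by
        have : n - 1 = (n - 2) + 1 := by omega
        rw [this, catalan_succ']
      rw [hcat]
      refine Finset.sum_nbij' (i := fun p => (p.1 - 1, p.2 - 1))
        (j := fun p => (p.1 + 1, p.2 + 1)) ?_ ?_ ?_ ?_ ?_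
      · intro p hp
        simp only [Finset.mem_filter, Finset.HasAntidiagonal.mem_antidiagonal] at hp ⊢
        omega
      · intro p hp
        simp only [Finset.mem_filter, Finset.HasAntidiagonal.mem_antidiagonal] at hp ⊢
        omega
      · rintro ⟨a, b⟩ hp
        simp only [Finset.mem_filter, Finset.HasAntidiagonal.mem_antidiagonal] at hp
        simp only [Prod.mk.injEq]
        omega
      · intro p hp
        simp
      · intro p hp
        simp only [Finset.mem_filter, Finset.HasAntidiagonal.mem_antidiagonal] at hp
        rw [IH p.1 (by omega) (by omega), IH p.2 (by omega) (by omega)]
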